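/- arXiv:2206.00927 — 3 statements merged into one kernel-verified Lean document; each statement's English description precedes it below -/
import Mathlib

section
/- Suppose x satisfies the ODE dx/dt = (d log α/dt)·x + (g²(t)/(2σ(t)))·ε(t), where g²(t) = −2σ²(t)·dλ/dt and λ(t) = log(α(t)/σ(t)). Then for s > t, x(t) = (α(t)/α(s)) x(s) − α(t) ∫_{λ(s)}^{λ(t)} e^{−λ} ε̂(λ) dλ, where ε̂(λ) = ε(t_λ(λ)) and t_λ is the inverse function of λ(t). -/
/-- Exact solution of the diffusion ODE: if `x' = (log α)' x + (g²/(2σ)) ε` with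
`g² = (σ²)' − 2 (log α)' σ²`, `λ(t) = log(α(t)/σ(t))` strictly decreasing with inverse `t_λ`,
then `x t = (α t / α s) x s − α t ∫_{λ(s)}^{λ(t)} e^{−λ} ε(t_λ(λ)) dλ` for `s > t`. -/
theorem stmt2 (α σ : ℝ → ℝ) (hα : ∀ t, 0 < α t) (hσ : ∀ t, 0 < σ t)
    (hαd : Differentiable ℝ α) (hσd : Differentiable ℝ σ)
    (lam : ℝ → ℝ) (hlam : ∀ t, lam t = Real.log (α t) - Real.log (σ t))
    (hanti : StrictAnti lam)
    (tlam : ℝ → ℝ) (hinv : ∀ t, tlam (lam t) = t) (hinv' : ∀ v, lam (tlam v) = v)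
    (ε : ℝ → ℝ) (hε : Continuous ε)
    (g2 : ℝ → ℝ)
    (hg2 : ∀ t, g2 t = deriv (fun u => (σ u) ^ 2) t -
      2 * deriv (fun u => Real.log (α u)) t * (σ t) ^ 2)
    (x : ℝ → ℝ) (hx : Differentiable ℝ x)
    (hode : ∀ u, deriv x u = deriv (fun v => Real.log (α v)) u * x u + g2 u / (2 * σ u) * ε u)
    (s t : ℝ) (hst : t < s) :
    x t = α t / α s * x s -
      α t * ∫ l in lam s..lam t, Real.exp (-l) * ε (tlam l) := by
  -- tlam is continuous
  have htlam_anti : StrictAnti tlam := by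
    intro v1 v2 h
    by_contra hle
    push_neg at hle
    rcases eq_or_lt_of_le hle with he | hlt
    · have := congrArg lam he
      rw [hinv', hinv'] at this
      exact absurd this (ne_of_lt h)
    · have := hanti hlt
      rw [hinv', hinv'] at this
      exact absurd h (not_lt.2 this.le)
  have htlam_mono : StrictMono (fun v => tlam (-v)) := fun a b h => htlam_anti (neg_lt_neg h)
  have htlam_surj : Function.Surjective (fun v => tlam (-v)) := fun u => ⟨-lam u, by simp [hinv]⟩
  have htlam_cont : Continuous tlam := by
    have := (StrictMono.orderIsoOfSurjective _ htlam_mono htlam_surj).continuous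
    have h2 : Continuous (fun v => tlam (-(-v))) := this.comp continuous_neg
    simpa using h2
  -- the integrand
  set f : ℝ → ℝ := fun v => Real.exp (-v) * ε (tlam v) with hf_def
  have hf_cont : Continuous f :=
    (Real.continuous_exp.comp continuous_neg).mul (hε.comp htlam_cont)
  -- the running integral
  set F : ℝ → ℝ := fun l => ∫ v in lam s..l, f v with hF_def
  have hF_deriv : ∀ l, HasDerivAt F (f l) l := fun l =>
    intervalIntegral.integral_hasDerivAt_right
      (hf_cont.intervalIntegrable _ _)
      (hf_cont.stronglyMeasurableAtFilter _ _)
      hf_cont.continuousAt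
  -- lam derivative
  have hlogα : ∀ u, HasDerivAt (fun v => Real.log (α v)) (deriv α u / α u) u := fun u =>
    ((hαd u).hasDerivAt).log (hα u).ne'
  have hlogσ : ∀ u, HasDerivAt (fun v => Real.log (σ v)) (deriv σ u / σ u) u := fun u =>
    ((hσd u).hasDerivAt).log (hσ u).ne'
  have hlam_deriv : ∀ u, HasDerivAt lam (deriv α u / α u - deriv σ u / σ u) u := by
    intro u
    have h1 := (hlogα u).sub (hlogσ u)
    exact h1.congr_of_eventuallyEq (Filter.Eventually.of_forall fun v => (hlam v))
  -- H := x/α + F ∘ lam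
  set H : ℝ → ℝ := fun u => x u / α u + F (lam u) with hH_def
  have hH_deriv : ∀ u, HasDerivAt H 0 u := by
    intro u
    have hy : HasDerivAt (fun v => x v / α v)
        ((deriv x u * α u - x u * deriv α u) / (α u) ^ 2) u :=
      ((hx u).hasDerivAt).div ((hαd u).hasDerivAt) (hα u).ne'
    have hFc : HasDerivAt (fun v => F (lam v))
        (f (lam u) * (deriv α u / α u - deriv σ u / σ u)) u :=
      (hF_deriv (lam u)).comp u (hlam_deriv u)
    have hsum := hy.add hFc
    convert hsum using 1
    · rfl
    · rfl
    · rfl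
    -- show 0 = D + f (lam u) * lam' u
    have hflam : f (lam u) = σ u / α u * ε u := by
      have : Real.exp (-(lam u)) = σ u / α u := by
        rw [hlam u, neg_sub, Real.exp_sub, Real.exp_log (hσ u), Real.exp_log (hα u)]
      simp only [hf_def, this, hinv u]
    have hσ2 : deriv (fun v => (σ v) ^ 2) u = 2 * σ u * deriv σ u := by
      have := (show HasDerivAt (fun v => (σ v) ^ 2) _ u from ((hσd u).hasDerivAt).pow 2).deriv
      simpa [mul_comm, mul_assoc, mul_left_comm] using this
    have hxd := hode u
    rw [(hlogα u).deriv] at hxd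
    rw [hxd, hflam, hg2 u, hσ2, (hlogα u).deriv]
    have hA := (hα u).ne'
    have hS := (hσ u).ne'
    field_simp
    ring
  have hH_diff : Differentiable ℝ H := fun u => (hH_deriv u).differentiableAt
  have hH_const : H t = H s :=
    is_const_of_deriv_eq_zero hH_diff (fun u => (hH_deriv u).deriv) t s
  have hFs : F (lam s) = 0 := intervalIntegral.integral_same
  simp only [hH_def, hFs, add_zero] at hH_const
  have hAt := (hα t).ne'
  have hAs := (hα s).ne'
  have : x t / α t = x s / α s - F (lam t) := by linarith
  have goal : x t = α t / α s * x s - α t * F (lam t) := by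
    field_simp at this ⊢
    linarith
  exact goal
end

section
/- Consider the scheme for the ODE x' = f(t)x + b(t) over one step: x̃_t = (α_t/α_s)x_s − σ_t(e^h − 1)b̂(λ_s), where b̂(λ) = e^{λ} · (the nonlinear part evaluated along the exact solution), h = λ_t − λ_s, and the exact solution is x_t = (α_t/α_s)x_s − α_t ∫_{λ_s}^{λ_t} e^{−λ} b̂(λ)dλ. If b̂ is C¹ with |b̂'| ≤ L on [λ_t, λ_s], then |x_t − x̃_t| ≤ α_t · L · e^{|λ_s|+|h|} · h²/2. -/
/-- Local truncation error bound for DPM-Solver-1: if `b̂` is `C¹` with `|b̂'| ≤ L` on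
`[λ_s, λ_t]`, `h = λ_t − λ_s > 0`, `σ_t = α_t e^{−λ_t}`, then the one-step error satisfies
`|x_t − x̃_t| ≤ α_t · L · e^{|λ_s| + |h|} · h²/2`. -/
theorem stmt16 (lams lamt αs αt σt xs L : ℝ)
    (hh : 0 < lamt - lams) (hαs : 0 < αs) (hαt : 0 < αt)
    (hσt : σt = αt * Real.exp (-lamt))
    (b b' : ℝ → ℝ)
    (hb : ∀ l ∈ Set.Icc lams lamt, HasDerivAt b (b' l) l)
    (hb' : ContinuousOn b' (Set.Icc lams lamt))
    (hL : ∀ l ∈ Set.Icc lams lamt, |b' l| ≤ L)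
    (xt xtApprox : ℝ)
    (hxt : xt = αt / αs * xs - αt * ∫ l in lams..lamt, Real.exp (-l) * b l)
    (hxa : xtApprox = αt / αs * xs - σt * (Real.exp (lamt - lams) - 1) * b lams) :
    |xt - xtApprox| ≤ αt * L * Real.exp (|lams| + |lamt - lams|) * (lamt - lams) ^ 2 / 2 := by
  have hle : lams ≤ lamt := by linarith
  have hLnn : 0 ≤ L := le_trans (abs_nonneg _) (hL lams ⟨le_refl _, hle⟩)
  set B : ℝ := |lams| + |lamt - lams| with hB
  have hbc : ContinuousOn b (Set.Icc lams lamt) := fun l hl =>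
    (hb l hl).continuousAt.continuousWithinAt
  have hint1 : IntervalIntegrable (fun l => Real.exp (-l) * b l) MeasureTheory.volume lams lamt := by
    apply ContinuousOn.intervalIntegrable
    rw [Set.uIcc_of_le hle]
    exact ((Real.continuous_exp.comp continuous_neg).continuousOn).mul hbc
  have hint2 : IntervalIntegrable (fun l => Real.exp (-l) * b lams) MeasureTheory.volume lams lamt :=
    ((Real.continuous_exp.comp continuous_neg).mul continuous_const).intervalIntegrable _ _
  have hexpint : (∫ l in lams..lamt, Real.exp (-l)) = Real.exp (-lams) - Real.exp (-lamt) := by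
    have h1 := intervalIntegral.integral_comp_neg (a := lams) (b := lamt) (fun x => Real.exp x)
    rw [h1, integral_exp]
  have hsplit : (∫ l in lams..lamt, Real.exp (-l) * (b l - b lams))
      = (∫ l in lams..lamt, Real.exp (-l) * b l)
        - (Real.exp (-lams) - Real.exp (-lamt)) * b lams := by
    have : (fun l => Real.exp (-l) * (b l - b lams))
        = fun l => Real.exp (-l) * b l - Real.exp (-l) * b lams := by
      funext l; ring
    rw [this, intervalIntegral.integral_sub hint1 hint2,
      intervalIntegral.integral_mul_const, hexpint]
  have hfac : Real.exp (-lamt) * (Real.exp (lamt - lams) - 1)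
      = Real.exp (-lams) - Real.exp (-lamt) := by
    have : Real.exp (-lamt) * Real.exp (lamt - lams) = Real.exp (-lams) := by
      rw [← Real.exp_add]; ring_nf
    nlinarith [this]
  have key : xt - xtApprox = -(αt * ∫ l in lams..lamt, Real.exp (-l) * (b l - b lams)) := by
    rw [hxt, hxa, hσt, hsplit]
    linear_combination αt * b lams * hfac
  -- pointwise bound
  have hptw : ∀ l ∈ Set.Icc lams lamt,
      |Real.exp (-l) * (b l - b lams)| ≤ L * Real.exp B * (l - lams) := by
    intro l hl
    have hmvt : |b l - b lams| ≤ L * |l - lams| := by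
      have hconv : Convex ℝ (Set.Icc lams lamt) := convex_Icc _ _
      have := hconv.norm_image_sub_le_of_norm_hasDerivWithin_le
        (fun x hx => (hb x hx).hasDerivWithinAt)
        (fun x hx => by simpa using hL x hx)
        (⟨le_refl _, hle⟩ : lams ∈ Set.Icc lams lamt) hl
      simpa [Real.norm_eq_abs] using this
    have hexp : Real.exp (-l) ≤ Real.exp B := by
      apply Real.exp_le_exp.mpr
      have h1 : -l ≤ -lams := by linarith [hl.1]
      have : -lams ≤ |lams| := neg_le_abs _
      have : (0:ℝ) ≤ |lamt - lams| := abs_nonneg _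
      simp only [hB]; linarith [neg_le_abs lams]
    have habs : |l - lams| = l - lams := abs_of_nonneg (by linarith [hl.1])
    calc |Real.exp (-l) * (b l - b lams)| = Real.exp (-l) * |b l - b lams| := by
          rw [abs_mul, abs_of_pos (Real.exp_pos _)]
      _ ≤ Real.exp B * (L * (l - lams)) := by
          apply mul_le_mul hexp (by rw [← habs]; exact_mod_cast hmvt)
            (abs_nonneg _) (le_of_lt (Real.exp_pos _))
      _ = L * Real.exp B * (l - lams) := by ring
  have hgint : IntervalIntegrable (fun l => L * Real.exp B * (l - lams))
      MeasureTheory.volume lams lamt :=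
    (continuous_const.mul (continuous_id.sub continuous_const)).intervalIntegrable _ _
  have hgval : (∫ l in lams..lamt, L * Real.exp B * (l - lams))
      = L * Real.exp B * ((lamt - lams) ^ 2 / 2) := by
    rw [intervalIntegral.integral_const_mul]
    congr 1
    have h1 := intervalIntegral.integral_comp_sub_right (a := lams) (b := lamt)
      (fun u => u) lams
    rw [h1]
    simp [integral_id]
  have hbound : |∫ l in lams..lamt, Real.exp (-l) * (b l - b lams)|
      ≤ L * Real.exp B * ((lamt - lams) ^ 2 / 2) := by
    have := intervalIntegral.norm_integral_le_abs_of_norm_le (μ := MeasureTheory.volume)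
      (f := fun l => Real.exp (-l) * (b l - b lams))
      (g := fun l => L * Real.exp B * (l - lams)) ?_ hgint
    · rw [hgval] at this
      have hnn : 0 ≤ L * Real.exp B * ((lamt - lams) ^ 2 / 2) := by positivity
      simpa [Real.norm_eq_abs, abs_of_nonneg hnn] using this
    · filter_upwards [MeasureTheory.ae_restrict_mem measurableSet_uIoc] with l hl
      have : l ∈ Set.Icc lams lamt := by
        rw [Set.uIoc_of_le hle] at hl
        exact ⟨le_of_lt hl.1, hl.2⟩
      rw [Real.norm_eq_abs]; exact hptw l this
  rw [key, abs_neg, abs_mul, abs_of_pos hαt]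
  calc αt * |∫ l in lams..lamt, Real.exp (-l) * (b l - b lams)|
      ≤ αt * (L * Real.exp B * ((lamt - lams) ^ 2 / 2)) :=
        mul_le_mul_of_nonneg_left hbound (le_of_lt hαt)
    _ = αt * L * Real.exp B * (lamt - lams) ^ 2 / 2 := by ring
end

section
/- For a C² function ε̂ : ℝ → ℝ, the quantity ∫_{λ_s}^{λ_s+h} e^{−λ} ε̂(λ) dλ equals e^{−λ_s−h}[hφ_1(h)ε̂(λ_s) + h²φ_2(h)ε̂'(λ_s)] + R where |R| ≤ e^{−λ_s−h}·(sup_{[λ_s,λ_s+h]}|ε̂''|)·h³φ_3(h), with φ_k as the exponential integrator functions. -/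
open Real Set MeasureTheory intervalIntegral

/-- Second-order expansion of the exponentially weighted integral with remainder bound:
for `ε̂` C² on `[λ_s, λ_s + h]` with `|ε̂''| ≤ M` there,
`∫_{λ_s}^{λ_s+h} e^{−λ} ε̂(λ) dλ = e^{−λ_s−h}[h φ₁(h) ε̂(λ_s) + h² φ₂(h) ε̂'(λ_s)] + R`
with `|R| ≤ e^{−λ_s−h} · M · h³ φ₃(h)`. -/
theorem stmt17 (lams h : ℝ) (hh : 0 < h) (ε ε' ε'' : ℝ → ℝ) (M : ℝ)
    (hd1 : ∀ l ∈ Set.Icc lams (lams + h), HasDerivAt ε (ε' l) l)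
    (hd2 : ∀ l ∈ Set.Icc lams (lams + h), HasDerivAt ε' (ε'' l) l)
    (hc : ContinuousOn ε'' (Set.Icc lams (lams + h)))
    (hM : ∀ l ∈ Set.Icc lams (lams + h), |ε'' l| ≤ M) :
    ∃ R : ℝ,
      (∫ l in lams..lams + h, Real.exp (-l) * ε l) =
        Real.exp (-lams - h) *
          (h * ((Real.exp h - 1) / h) * ε lams +
            h ^ 2 * ((Real.exp h - h - 1) / h ^ 2) * ε' lams) + R ∧
      |R| ≤ Real.exp (-lams - h) * M *
        (h ^ 3 * ((Real.exp h - h ^ 2 / 2 - h - 1) / h ^ 3)) := by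
  set a := lams with ha
  set b := lams + h with hb
  have hab : a ≤ b := by simp [hb]; linarith
  have hM0 : 0 ≤ M := le_trans (abs_nonneg _) (hM a ⟨le_rfl, hab⟩)
  have hεc : ContinuousOn ε (Icc a b) := fun l hl => ((hd1 l hl).continuousAt).continuousWithinAt
  have hε'c : ContinuousOn ε' (Icc a b) := fun l hl => ((hd2 l hl).continuousAt).continuousWithinAt
  -- Lipschitz bound on ε'
  have hlip : ∀ t ∈ Icc a b, |ε' t - ε' a| ≤ M * (t - a) := by
    intro t ht
    have key := (convex_Icc a b).norm_image_sub_le_of_norm_hasDerivWithin_le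
      (fun x hx => (hd2 x hx).hasDerivWithinAt) (fun x hx => by
        rw [Real.norm_eq_abs]; exact hM x hx) ⟨le_rfl, hab⟩ ht
    rwa [Real.norm_eq_abs, Real.norm_eq_abs,
      abs_of_nonneg (by linarith [ht.1] : (0:ℝ) ≤ t - a)] at key
  -- Taylor remainder bound
  have hg : ∀ l ∈ Icc a b, |ε l - ε a - ε' a * (l - a)| ≤ M * (l - a) ^ 2 / 2 := by
    intro l hl
    have hsub : Icc a l ⊆ Icc a b := Icc_subset_Icc le_rfl hl.2
    have hint : IntervalIntegrable ε' volume a l := by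
      apply ContinuousOn.intervalIntegrable
      rw [uIcc_of_le hl.1]; exact hε'c.mono hsub
    have hftc : ∫ t in a..l, ε' t = ε l - ε a :=
      intervalIntegral.integral_eq_sub_of_hasDerivAt
        (fun t ht => hd1 t (hsub (by rwa [uIcc_of_le hl.1] at ht))) hint
    have h1 : ε l - ε a - ε' a * (l - a) = ∫ t in a..l, (ε' t - ε' a) := by
      rw [intervalIntegral.integral_sub hint intervalIntegrable_const, hftc,
        intervalIntegral.integral_const, smul_eq_mul]
      ring
    rw [h1]
    have hintabs : IntervalIntegrable (fun t => |ε' t - ε' a|) volume a l := by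
      apply ContinuousOn.intervalIntegrable
      rw [uIcc_of_le hl.1]
      exact ((hε'c.mono hsub).sub continuousOn_const).abs
    have hintlin : IntervalIntegrable (fun t => M * (t - a)) volume a l :=
      (Continuous.intervalIntegrable (by fun_prop) a l)
    have h2 : |∫ t in a..l, (ε' t - ε' a)| ≤ ∫ t in a..l, M * (t - a) := by
      calc |∫ t in a..l, (ε' t - ε' a)| ≤ ∫ t in a..l, |ε' t - ε' a| :=
            intervalIntegral.abs_integral_le_integral_abs hl.1
        _ ≤ ∫ t in a..l, M * (t - a) := by
            apply intervalIntegral.integral_mono_on hl.1 hintabs hintlin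
            intro t ht; exact hlip t (hsub ht)
    have h3 : (∫ t in a..l, M * (t - a)) = M * (l - a) ^ 2 / 2 := by
      rw [intervalIntegral.integral_const_mul]
      have : (∫ t in a..l, (t - a)) = (l - a) ^ 2 / 2 := by
        rw [intervalIntegral.integral_comp_sub_right (fun t => t) a, sub_self,
          integral_id]
        ring
      rw [this]; ring
    linarith [h2, h3.symm.le]
  -- antiderivative computations
  have hexp : ∀ l : ℝ, HasDerivAt (fun x => Real.exp (-x)) (-Real.exp (-l)) l := by
    intro l
    simpa [Function.comp_def] using (Real.hasDerivAt_exp (-l)).comp l (hasDerivAt_neg l)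
  have hI1 : (∫ l in a..b, Real.exp (-l)) = Real.exp (-a) - Real.exp (-b) := by
    have := intervalIntegral.integral_eq_sub_of_hasDerivAt
      (f := fun x => -Real.exp (-x)) (f' := fun x => Real.exp (-x))
      (fun t _ => by simpa [Pi.neg_def] using (hexp t).neg)
      (Continuous.intervalIntegrable (by fun_prop) a b)
    rw [this]; ring
  have hI2 : (∫ l in a..b, Real.exp (-l) * (l - a))
      = Real.exp (-a) - Real.exp (-b) * (h + 1) := by
    have hd : ∀ t : ℝ, HasDerivAt (fun x => -Real.exp (-x) * (x - a + 1))
        (Real.exp (-t) * (t - a)) t := by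
      intro t
      have h2 : HasDerivAt (fun x : ℝ => x - a + 1) 1 t := by
        simpa using ((hasDerivAt_id t).sub_const a).add_const 1
      have := ((hexp t).neg).mul h2
      exact this.congr_deriv (by simp only [Pi.neg_apply]; ring)
    have := intervalIntegral.integral_eq_sub_of_hasDerivAt (fun t _ => hd t)
      (Continuous.intervalIntegrable (by fun_prop) a b)
    rw [this, hb, ha]; ring_nf
  have hI3 : (∫ l in a..b, Real.exp (-l) * ((l - a) ^ 2 / 2))
      = Real.exp (-a) - Real.exp (-b) * (h ^ 2 / 2 + h + 1) := by
    have hd : ∀ t : ℝ, HasDerivAt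
        (fun x => -Real.exp (-x) * ((x - a) ^ 2 / 2 + (x - a) + 1))
        (Real.exp (-t) * ((t - a) ^ 2 / 2)) t := by
      intro t
      have h2 : HasDerivAt (fun x : ℝ => (x - a) ^ 2 / 2 + (x - a) + 1)
          ((t - a) + 1) t := by
        have hsq : HasDerivAt (fun x : ℝ => (x - a) ^ 2) (2 * (t - a)) t := by
          simpa [Pi.pow_def] using (((hasDerivAt_id t).sub_const a).pow 2)
        have := ((hsq.div_const 2).add ((hasDerivAt_id t).sub_const a)).add_const 1
        exact this.congr_deriv (by ring)
      have := ((hexp t).neg).mul h2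
      exact this.congr_deriv (by simp only [Pi.neg_apply]; ring)
    have := intervalIntegral.integral_eq_sub_of_hasDerivAt (fun t _ => hd t)
      (Continuous.intervalIntegrable (by fun_prop) a b)
    rw [this, hb, ha]; ring_nf
  -- integrability
  have hint1 : IntervalIntegrable (fun l => Real.exp (-l)) volume a b :=
    Continuous.intervalIntegrable (by fun_prop) a b
  have hint2 : IntervalIntegrable (fun l => Real.exp (-l) * (l - a)) volume a b :=
    Continuous.intervalIntegrable (by fun_prop) a b
  have hintε : IntervalIntegrable (fun l => Real.exp (-l) * ε l) volume a b := by
    apply ContinuousOn.intervalIntegrable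
    rw [uIcc_of_le hab]
    exact (Real.continuous_exp.comp continuous_neg).continuousOn.mul hεc
  -- define R
  refine ⟨∫ l in a..b, Real.exp (-l) * (ε l - ε a - ε' a * (l - a)), ?_, ?_⟩
  · have hsplit : (∫ l in a..b, Real.exp (-l) * (ε l - ε a - ε' a * (l - a)))
        = (∫ l in a..b, Real.exp (-l) * ε l)
          - ε a * (∫ l in a..b, Real.exp (-l))
          - ε' a * (∫ l in a..b, Real.exp (-l) * (l - a)) := by
      rw [← intervalIntegral.integral_const_mul, ← intervalIntegral.integral_const_mul,
        ← intervalIntegral.integral_sub hintε (hint1.const_mul _),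
        ← intervalIntegral.integral_sub (hintε.sub (hint1.const_mul _)) (hint2.const_mul _)]
      congr 1; funext l; ring
    rw [hsplit, hI1, hI2]
    have hEa : Real.exp (-a) = Real.exp (-a - h) * Real.exp h := by
      rw [← Real.exp_add]; ring_nf
    have hEb : Real.exp (-b) = Real.exp (-a - h) := by
      rw [hb, ha]; ring_nf
    rw [hEa, hEb]
    field_simp
    ring
  · have hbound : |∫ l in a..b, Real.exp (-l) * (ε l - ε a - ε' a * (l - a))|
        ≤ ∫ l in a..b, Real.exp (-l) * (M * (l - a) ^ 2 / 2) := by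
      have hintg : IntervalIntegrable
          (fun l => |Real.exp (-l) * (ε l - ε a - ε' a * (l - a))|) volume a b := by
        apply ContinuousOn.intervalIntegrable
        rw [uIcc_of_le hab]
        exact (((Real.continuous_exp.comp continuous_neg).continuousOn.mul
          ((hεc.sub continuousOn_const).sub (continuousOn_const.mul
            (by fun_prop)))).abs)
      have hintB : IntervalIntegrable
          (fun l => Real.exp (-l) * (M * (l - a) ^ 2 / 2)) volume a b :=
        Continuous.intervalIntegrable (by fun_prop) a b
      calc |∫ l in a..b, Real.exp (-l) * (ε l - ε a - ε' a * (l - a))|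
          ≤ ∫ l in a..b, |Real.exp (-l) * (ε l - ε a - ε' a * (l - a))| :=
            intervalIntegral.abs_integral_le_integral_abs hab
        _ ≤ ∫ l in a..b, Real.exp (-l) * (M * (l - a) ^ 2 / 2) := by
            apply intervalIntegral.integral_mono_on hab hintg hintB
            intro l hl
            rw [abs_mul, abs_of_pos (Real.exp_pos _)]
            have := hg l hl
            have h2 : M * (l - a) ^ 2 / 2 = M * (l - a) ^ 2 / 2 := rfl
            nlinarith [Real.exp_pos (-l), hg l hl, abs_nonneg (ε l - ε a - ε' a * (l - a))]
    have hval : (∫ l in a..b, Real.exp (-l) * (M * (l - a) ^ 2 / 2))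
        = M * (Real.exp (-a) - Real.exp (-b) * (h ^ 2 / 2 + h + 1)) := by
      rw [← hI3, ← intervalIntegral.integral_const_mul]
      congr 1; funext l; ring
    have hEa : Real.exp (-a) = Real.exp (-a - h) * Real.exp h := by
      rw [← Real.exp_add]; ring_nf
    have hEb : Real.exp (-b) = Real.exp (-a - h) := by
      rw [hb, ha]; ring_nf
    calc |∫ l in a..b, Real.exp (-l) * (ε l - ε a - ε' a * (l - a))|
        ≤ M * (Real.exp (-a) - Real.exp (-b) * (h ^ 2 / 2 + h + 1)) := by
          rw [← hval]; exact hbound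
      _ = Real.exp (-a - h) * M * (h ^ 3 * ((Real.exp h - h ^ 2 / 2 - h - 1) / h ^ 3)) := by
          rw [hEa, hEb]; field_simp; ring
end
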